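/- The row-wise softmax function on ℝ^n is 1-Lipschitz with respect to the Euclidean norm (indeed its Jacobian diag(s) − s sᵀ has operator norm at most 1). -/

import Mathlib

open Real Finset

namespace SoftmaxAux

lemma key_sum (n : ℕ) (s v : Fin n → ℝ) (m : ℝ) (hm : m = ∑ j, s j * v j)
    (h0 : ∀ i, 0 ≤ s i) (h1 : ∀ i, s i ≤ 1) (hs : ∑ i, s i = 1) :
    ∑ i, (s i * (v i - m)) ^ 2 ≤ ∑ i, (v i) ^ 2 := by
  calc ∑ i, (s i * (v i - m)) ^ 2 ≤ ∑ i, s i * (v i - m) ^ 2 := by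
        refine Finset.sum_le_sum fun i _ => ?_
        rw [mul_pow]
        have h2 : s i ^ 2 ≤ s i := by nlinarith [h0 i, h1 i]
        exact mul_le_mul_of_nonneg_right h2 (sq_nonneg _)
    _ = (∑ i, s i * (v i) ^ 2) - m ^ 2 := by
        have h : ∀ i ∈ Finset.univ, s i * (v i - m) ^ 2
            = s i * (v i) ^ 2 - 2 * m * (s i * v i) + m ^ 2 * s i := fun i _ => by ring
        rw [Finset.sum_congr rfl h, Finset.sum_add_distrib, Finset.sum_sub_distrib,
          ← Finset.mul_sum, ← Finset.mul_sum, hs, ← hm]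
        ring
    _ ≤ ∑ i, s i * (v i) ^ 2 := by nlinarith [sq_nonneg m]
    _ ≤ ∑ i, (v i) ^ 2 := Finset.sum_le_sum fun i _ => by
        have := h0 i; have := h1 i; nlinarith [sq_nonneg (v i)]

variable (n : ℕ)

lemma hasFDerivAt_coord (j : Fin n) (z : EuclideanSpace ℝ (Fin n)) :
    HasFDerivAt (fun z : EuclideanSpace ℝ (Fin n) => z j)
      (EuclideanSpace.proj (𝕜 := ℝ) j) z := by
  have := ContinuousLinearMap.hasFDerivAt (𝕜 := ℝ)
    (EuclideanSpace.proj (𝕜 := ℝ) (ι := Fin n) j) (x := z)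
  have he : ⇑(EuclideanSpace.proj (𝕜 := ℝ) (ι := Fin n) j)
      = fun z : EuclideanSpace ℝ (Fin n) => z j := by ext w; simp
  rwa [he] at this

/-- softmax -/
noncomputable def sm (z : EuclideanSpace ℝ (Fin n)) (i : Fin n) : ℝ :=
  Real.exp (z i) / ∑ j, Real.exp (z j)

end SoftmaxAux

set_option maxHeartbeats 1000000 in
/-- The softmax function on `ℝⁿ` (Euclidean norm) is `1`-Lipschitz. -/
theorem softmax_lipschitz (n : ℕ) :
    LipschitzWith 1 (fun z : EuclideanSpace ℝ (Fin n) =>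
      (WithLp.toLp 2 (fun i => Real.exp (z i) / ∑ j, Real.exp (z j)) : EuclideanSpace ℝ (Fin n))) := by
  rcases Nat.eq_zero_or_pos n with hn | hn
  · subst hn
    intro x y
    have : x = y := Subsingleton.elim x y
    simp [this]
  have : Nonempty (Fin n) := ⟨⟨0, hn⟩⟩
  have hSpos : ∀ z : EuclideanSpace ℝ (Fin n), 0 < ∑ j, Real.exp (z j) := fun z =>
    Finset.sum_pos (fun j _ => Real.exp_pos _) Finset.univ_nonempty
  have hs0 : ∀ z i, 0 ≤ SoftmaxAux.sm n z i := fun z i =>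
    div_nonneg (Real.exp_pos _).le (hSpos z).le
  have hs1 : ∀ z i, SoftmaxAux.sm n z i ≤ 1 := by
    intro z i
    rw [SoftmaxAux.sm, div_le_one (hSpos z)]
    exact Finset.single_le_sum (fun j _ => (Real.exp_pos (z j)).le) (Finset.mem_univ i)
  have hssum : ∀ z, ∑ i, SoftmaxAux.sm n z i = 1 := by
    intro z
    simp only [SoftmaxAux.sm]
    rw [← Finset.sum_div, div_self (hSpos z).ne']
  -- derivative of each coordinate
  have hcomp : ∀ (z : EuclideanSpace ℝ (Fin n)) i, HasFDerivAt
      (fun z : EuclideanSpace ℝ (Fin n) => Real.exp (z i) / ∑ j, Real.exp (z j))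
      (SoftmaxAux.sm n z i • (EuclideanSpace.proj i : EuclideanSpace ℝ (Fin n) →L[ℝ] ℝ)
        - SoftmaxAux.sm n z i • ∑ j, SoftmaxAux.sm n z j • (EuclideanSpace.proj j :
            EuclideanSpace ℝ (Fin n) →L[ℝ] ℝ)) z := by
    intro z i
    have hS : HasFDerivAt (fun z : EuclideanSpace ℝ (Fin n) => ∑ j, Real.exp (z j))
        (∑ j, Real.exp (z j) • (EuclideanSpace.proj j :
          EuclideanSpace ℝ (Fin n) →L[ℝ] ℝ)) z :=
      HasFDerivAt.fun_sum fun j _ => (SoftmaxAux.hasFDerivAt_coord n j z).exp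
    have hi := (SoftmaxAux.hasFDerivAt_coord n i z).exp
    have hne : (∑ j, Real.exp (z j)) ≠ 0 := (hSpos z).ne'
    have hinv := (hasFDerivAt_inv' (𝕜 := ℝ) hne).comp z hS
    have hmul := hi.mul hinv
    rw [show (fun z : EuclideanSpace ℝ (Fin n) => Real.exp (z i) / ∑ j, Real.exp (z j))
        = fun z : EuclideanSpace ℝ (Fin n) => Real.exp (z i) * (∑ j, Real.exp (z j))⁻¹
        from funext fun y => div_eq_mul_inv _ _]
    refine HasFDerivAt.congr_fderiv hmul ?_
    ext v
    simp only [SoftmaxAux.sm, ContinuousLinearMap.sub_apply, ContinuousLinearMap.smul_apply,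
      ContinuousLinearMap.sum_apply, ContinuousLinearMap.add_apply, Function.comp,
      ContinuousLinearMap.coe_comp', ContinuousLinearMap.comp_apply,
      ContinuousLinearMap.neg_apply, ContinuousLinearMap.mulLeftRight_apply,
      PiLp.proj_apply, smul_eq_mul, Finset.mul_sum]
    have h1 : ∑ x, (∑ j, Real.exp (z j))⁻¹ * (Real.exp (z x) * v x)
        = (∑ j, Real.exp (z j))⁻¹ * ∑ x, Real.exp (z x) * v x := by
      rw [Finset.mul_sum]
    have h2 : ∑ x, (Real.exp (z i) / ∑ j, Real.exp (z j))
          * ((Real.exp (z x) / ∑ j, Real.exp (z j)) * v x)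
        = (Real.exp (z i) * ((∑ j, Real.exp (z j))⁻¹ * (∑ j, Real.exp (z j))⁻¹))
            * ∑ x, Real.exp (z x) * v x := by
      rw [Finset.mul_sum]
      exact Finset.sum_congr rfl fun x _ => by ring
    rw [h1, h2]
    ring
  -- each coordinate is 1-Lipschitz
  have hcoord : ∀ i, LipschitzWith 1
      (fun z : EuclideanSpace ℝ (Fin n) => Real.exp (z i) / ∑ j, Real.exp (z j)) := by
    intro i
    apply lipschitzWith_of_nnnorm_fderiv_le (fun z => (hcomp z i).differentiableAt)
    intro z
    rw [(hcomp z i).fderiv, ← NNReal.coe_le_coe, coe_nnnorm, NNReal.coe_one]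
    refine ContinuousLinearMap.opNorm_le_bound _ zero_le_one fun v => ?_
    rw [one_mul]
    have happ : (SoftmaxAux.sm n z i • (EuclideanSpace.proj i : EuclideanSpace ℝ (Fin n) →L[ℝ] ℝ)
        - SoftmaxAux.sm n z i • ∑ j, SoftmaxAux.sm n z j • (EuclideanSpace.proj j :
            EuclideanSpace ℝ (Fin n) →L[ℝ] ℝ)) v
        = SoftmaxAux.sm n z i * (v i - ∑ j, SoftmaxAux.sm n z j * v j) := by
      simp only [ContinuousLinearMap.sub_apply, ContinuousLinearMap.smul_apply,
        ContinuousLinearMap.sum_apply, PiLp.proj_apply, smul_eq_mul, mul_sub,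
        Finset.mul_sum]
    rw [happ, EuclideanSpace.norm_eq, Real.norm_eq_abs]
    have hsq : (SoftmaxAux.sm n z i * (v i - ∑ j, SoftmaxAux.sm n z j * v j)) ^ 2
        ≤ ∑ j, (v j) ^ 2 := by
      refine le_trans ?_ (SoftmaxAux.key_sum n (SoftmaxAux.sm n z) v _ rfl
        (hs0 z) (hs1 z) (hssum z))
      exact Finset.single_le_sum (f := fun j => (SoftmaxAux.sm n z j
        * (v j - ∑ k, SoftmaxAux.sm n z k * v k)) ^ 2)
        (fun j _ => sq_nonneg _) (Finset.mem_univ i)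
    calc |SoftmaxAux.sm n z i * (v i - ∑ j, SoftmaxAux.sm n z j * v j)|
        = Real.sqrt ((SoftmaxAux.sm n z i * (v i - ∑ j, SoftmaxAux.sm n z j * v j)) ^ 2) :=
          (Real.sqrt_sq_eq_abs _).symm
      _ ≤ Real.sqrt (∑ j, (v j) ^ 2) := Real.sqrt_le_sqrt hsq
      _ = Real.sqrt (∑ j, ‖v j‖ ^ 2) := by simp [Real.norm_eq_abs, sq_abs]
  -- combine coordinates (the codomain carries the Euclidean metric)
  have hF : ∀ z : EuclideanSpace ℝ (Fin n), HasFDerivAt (fun z : EuclideanSpace ℝ (Fin n) =>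
      (WithLp.toLp 2 (fun i => Real.exp (z i) / ∑ j, Real.exp (z j)) : EuclideanSpace ℝ (Fin n)))
      (((PiLp.continuousLinearEquiv 2 ℝ (fun _ : Fin n => ℝ)).symm :
          (Fin n → ℝ) →L[ℝ] EuclideanSpace ℝ (Fin n)).comp
        (ContinuousLinearMap.pi fun i =>
          SoftmaxAux.sm n z i • (EuclideanSpace.proj i : EuclideanSpace ℝ (Fin n) →L[ℝ] ℝ)
          - SoftmaxAux.sm n z i • ∑ j, SoftmaxAux.sm n z j • (EuclideanSpace.proj j :
            EuclideanSpace ℝ (Fin n) →L[ℝ] ℝ))) z := fun z =>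
    ((PiLp.continuousLinearEquiv 2 ℝ (fun _ : Fin n => ℝ)).symm :
      (Fin n → ℝ) →L[ℝ] EuclideanSpace ℝ (Fin n)).hasFDerivAt.comp z
      (hasFDerivAt_pi'' fun i => hcomp z i)
  apply lipschitzWith_of_nnnorm_fderiv_le (fun z => (hF z).differentiableAt)
  intro z
  rw [(hF z).fderiv, ← NNReal.coe_le_coe, coe_nnnorm, NNReal.coe_one]
  refine ContinuousLinearMap.opNorm_le_bound _ zero_le_one fun v => ?_
  rw [one_mul, EuclideanSpace.norm_eq, EuclideanSpace.norm_eq]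
  apply Real.sqrt_le_sqrt
  simp only [ContinuousLinearMap.comp_apply, ContinuousLinearEquiv.coe_coe,
    PiLp.coe_symm_continuousLinearEquiv, PiLp.toLp_apply, ContinuousLinearMap.pi_apply,
    ContinuousLinearMap.sub_apply, ContinuousLinearMap.smul_apply,
    ContinuousLinearMap.sum_apply, PiLp.proj_apply, smul_eq_mul, Real.norm_eq_abs, sq_abs]
  convert SoftmaxAux.key_sum n (SoftmaxAux.sm n z) v _ rfl (hs0 z) (hs1 z) (hssum z) using 2
  ring
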